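/- (Gronwall lemma with singular kernel) Let 0 < β < 1, T > 0, a ≥ 0, c > 0, and let f : [0,T] → [0,∞) be a bounded measurable function satisfying f(t) ≤ a + c∫₀ᵗ (1 + (t−s)^{−β}) f(s) ds for all t ∈ [0,T]. Then there exists a constant K = K(c, β, T), independent of a, such that f(t) ≤ a·K for all t ∈ [0,T]. In particular, if a = 0 then f ≡ 0. -/

import Mathlib

open MeasureTheory intervalIntegral Set

theorem gronwall_singular_kernel (β T c : ℝ) (hβ : β ∈ Set.Ioo (0:ℝ) 1) (hT : 0 < T)
    (hc : 0 < c) :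
    ∃ K > 0, ∀ a ≥ (0:ℝ), ∀ f : ℝ → ℝ, Measurable f →
      (∀ t ∈ Set.Icc (0:ℝ) T, 0 ≤ f t) →
      (∃ B, ∀ t ∈ Set.Icc (0:ℝ) T, f t ≤ B) →
      (∀ t ∈ Set.Icc (0:ℝ) T, f t ≤ a + c * ∫ s in (0:ℝ)..t, (1 + (t - s) ^ (-β)) * f s) →
      ∀ t ∈ Set.Icc (0:ℝ) T, f t ≤ a * K := by
  obtain ⟨hβ0, hβ1⟩ := hβ
  have hγ : (0:ℝ) < 1 - β := by linarith
  -- choose δ > 0 with c*δ ≤ 1/4 and c*δ^(1-β)/(1-β) ≤ 1/4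
  set δ : ℝ := min (1/(4*c)) (((1-β)/(4*c)) ^ ((1-β)⁻¹)) with hδdef
  have h4c : (0:ℝ) < 4*c := by linarith
  have hδpos : 0 < δ := by
    apply lt_min
    · positivity
    · exact Real.rpow_pos_of_pos (by positivity) _
  have hδ1 : c * δ ≤ 1/4 := by
    have : δ ≤ 1/(4*c) := min_le_left _ _
    calc c * δ ≤ c * (1/(4*c)) := by nlinarith
    _ = 1/4 := by field_simp
  have hδ2 : c * δ ^ (1-β) / (1-β) ≤ 1/4 := by
    have h1 : δ ≤ ((1-β)/(4*c)) ^ ((1-β)⁻¹) := min_le_right _ _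
    have h2 : δ ^ (1-β) ≤ (((1-β)/(4*c)) ^ ((1-β)⁻¹)) ^ (1-β) :=
      Real.rpow_le_rpow hδpos.le h1 hγ.le
    have h3 : (((1-β)/(4*c)) ^ ((1-β)⁻¹)) ^ (1-β) = (1-β)/(4*c) := by
      rw [← Real.rpow_mul (by positivity), inv_mul_cancel₀ hγ.ne', Real.rpow_one]
    rw [div_le_iff₀ hγ]
    calc c * δ ^ (1-β) ≤ c * ((1-β)/(4*c)) := by nlinarith [h2.trans_eq h3]
    _ = 1/4 * (1-β) := by field_simp
  set C : ℝ := c * T * (1 + δ ^ (-β)) with hCdef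
  have hδβnn : 0 ≤ δ ^ (-β) := Real.rpow_nonneg hδpos.le _
  have hC : 0 ≤ C := by positivity
  -- the recursive constants
  set Kse : ℕ → ℝ := fun n => Nat.rec 1 (fun _ x => 2 + 2*C*x) n with hKse
  have hKsucc : ∀ k, Kse (k+1) = 2 + 2*C*Kse k := fun k => rfl
  have hKpos : ∀ k, 0 < Kse k := by
    intro k; induction k with
    | zero => norm_num [hKse]
    | succ k ih => rw [hKsucc]; positivity
  set N : ℕ := Nat.ceil (T/δ) with hN
  refine ⟨Kse N, hKpos N, ?_⟩
  intro a ha f hfm hfnn hbd hint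
  obtain ⟨B, hB⟩ := hbd
  -- the running sup
  set S : ℝ → ℝ := fun t => sSup (f '' Set.Icc 0 t) with hS
  have hbddA : ∀ t ∈ Set.Icc (0:ℝ) T, BddAbove (f '' Set.Icc 0 t) := by
    rintro t ht
    exact ⟨B, by rintro y ⟨s, hs, rfl⟩; exact hB s ⟨hs.1, hs.2.trans ht.2⟩⟩
  have hfleS : ∀ t ∈ Set.Icc (0:ℝ) T, ∀ s ∈ Set.Icc 0 t, f s ≤ S t := by
    intro t ht s hs
    exact le_csSup (hbddA t ht) (Set.mem_image_of_mem f hs)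
  have hSnn : ∀ t ∈ Set.Icc (0:ℝ) T, 0 ≤ S t := by
    intro t ht
    exact le_trans (hfnn 0 ⟨le_refl 0, hT.le⟩) (hfleS t ht 0 ⟨le_refl 0, ht.1⟩)
  -- integrability of the integrand on [0, τ] for τ ∈ [0, T]
  have hker : ∀ τ : ℝ, IntervalIntegrable (fun s => (τ - s) ^ (-β)) volume 0 τ := by
    intro τ
    have h1 : IntervalIntegrable (fun u : ℝ => u ^ (-β)) volume τ 0 :=
      intervalIntegrable_rpow' (by linarith)
    simpa using h1.comp_sub_left τ
  have hgker : ∀ τ : ℝ, IntervalIntegrable (fun s => 1 + (τ - s) ^ (-β)) volume 0 τ := by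
    intro τ; exact (_root_.intervalIntegrable_const).add (hker τ)
  have hInt : ∀ τ ∈ Set.Icc (0:ℝ) T,
      IntervalIntegrable (fun s => (1 + (τ - s) ^ (-β)) * f s) volume 0 τ := by
    intro τ hτ
    set B' : ℝ := max B 0 with hB'
    have hgB : IntervalIntegrable (fun s => (1 + (τ - s) ^ (-β)) * B') volume 0 τ :=
      (hgker τ).mul_const B'
    apply hgB.mono_fun
    · exact ((hgker τ).def'.aestronglyMeasurable.mul
        hfm.aestronglyMeasurable.restrict)
    · filter_upwards [ae_restrict_mem measurableSet_uIoc] with s hs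
      rw [Set.uIoc_of_le hτ.1] at hs
      have hs0 : (0:ℝ) ≤ s := hs.1.le
      have hsT : s ≤ T := hs.2.trans hτ.2
      have hkpos : 0 ≤ 1 + (τ - s) ^ (-β) := by
        have := Real.rpow_nonneg (sub_nonneg.2 hs.2) (-β); linarith
      have hfs0 : 0 ≤ f s := hfnn s ⟨hs0, hsT⟩
      have hfsB : f s ≤ B' := le_trans (hB s ⟨hs0, hsT⟩) (le_max_left _ _)
      simp only [Real.norm_eq_abs]
      rw [abs_mul, abs_of_nonneg hkpos, abs_of_nonneg hfs0,
        abs_of_nonneg (by positivity : (0:ℝ) ≤ (1 + (τ - s) ^ (-β)) * B')]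
      exact mul_le_mul_of_nonneg_left hfsB hkpos
  -- main induction
  have main : ∀ k : ℕ, ∀ t ∈ Set.Icc (0:ℝ) T, t ≤ k * δ → f t ≤ a * Kse k := by
    intro k
    induction k with
    | zero =>
      intro t ht ht0
      have : t = 0 := le_antisymm (by simpa using ht0) ht.1
      subst this
      have h := hint 0 ⟨le_refl 0, hT.le⟩
      simpa [hKse] using h
    | succ k ih =>
      intro t ht htk
      -- bound each f τ for τ ∈ [0, t]
      have key : ∀ τ ∈ Set.Icc 0 t, f τ ≤ a + C * (a * Kse k) + (1/2) * S t := by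
        intro τ hτ
        have hτT : τ ∈ Set.Icc (0:ℝ) T := ⟨hτ.1, hτ.2.trans ht.2⟩
        have hτ0 : (0:ℝ) ≤ τ := hτ.1
        set τ' : ℝ := max (τ - δ) 0 with hτ'def
        have hτ'0 : 0 ≤ τ' := le_max_right _ _
        have hτ'τ : τ' ≤ τ := max_le (by linarith) hτ0
        have hIτ := hInt τ hτT
        have hI1 : IntervalIntegrable (fun s => (1 + (τ - s) ^ (-β)) * f s) volume 0 τ' :=
          hIτ.mono_set' (by rw [Set.uIoc_of_le hτ'0, Set.uIoc_of_le hτ0]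
                            exact Set.Ioc_subset_Ioc le_rfl hτ'τ)
        have hI2 : IntervalIntegrable (fun s => (1 + (τ - s) ^ (-β)) * f s) volume τ' τ :=
          hIτ.mono_set' (by rw [Set.uIoc_of_le hτ'τ, Set.uIoc_of_le hτ0]
                            exact Set.Ioc_subset_Ioc hτ'0 le_rfl)
        have hsplit : (∫ s in (0:ℝ)..τ, (1 + (τ - s) ^ (-β)) * f s)
            = (∫ s in (0:ℝ)..τ', (1 + (τ - s) ^ (-β)) * f s)
              + ∫ s in τ'..τ, (1 + (τ - s) ^ (-β)) * f s :=
          (integral_add_adjacent_intervals hI1 hI2).symm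
        -- head bound
        have hhead : c * (∫ s in (0:ℝ)..τ', (1 + (τ - s) ^ (-β)) * f s) ≤ C * (a * Kse k) := by
          by_cases hcase : τ - δ ≤ 0
          · have : τ' = 0 := max_eq_right hcase
            rw [this, intervalIntegral.integral_same, mul_zero]
            have : 0 ≤ a * Kse k := mul_nonneg ha (hKpos k).le
            positivity
          · push_neg at hcase
            have hτ'eq : τ' = τ - δ := max_eq_left (by linarith)
            have hpt : ∀ s ∈ Set.Icc (0:ℝ) τ',
                (1 + (τ - s) ^ (-β)) * f s ≤ (1 + δ ^ (-β)) * (a * Kse k) := by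
              intro s hs
              have hsδ : δ ≤ τ - s := by
                have := hs.2; rw [hτ'eq] at this; linarith
              have hker_le : (τ - s) ^ (-β) ≤ δ ^ (-β) :=
                Real.rpow_le_rpow_of_nonpos hδpos hsδ (by linarith)
              have hfs0 : 0 ≤ f s := hfnn s ⟨hs.1, by
                have : s ≤ τ' := hs.2
                have : s ≤ τ := this.trans hτ'τ
                exact this.trans hτT.2⟩
              have hfsK : f s ≤ a * Kse k := by
                apply ih s ⟨hs.1, (hs.2.trans hτ'τ).trans hτT.2⟩
                have : s ≤ τ' := hs.2
                rw [hτ'eq] at this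
                have : s ≤ τ - δ := this
                have hτt : τ ≤ t := hτ.2
                push_cast
                push_cast at htk
                linarith
              have hk0 : (0:ℝ) ≤ 1 + (τ - s) ^ (-β) := by
                have := Real.rpow_nonneg (by linarith : (0:ℝ) ≤ τ - s) (-β); linarith
              calc (1 + (τ - s) ^ (-β)) * f s ≤ (1 + δ ^ (-β)) * f s :=
                    mul_le_mul_of_nonneg_right (by linarith) hfs0
              _ ≤ (1 + δ ^ (-β)) * (a * Kse k) :=
                    mul_le_mul_of_nonneg_left hfsK (by positivity)
            have hmono : (∫ s in (0:ℝ)..τ', (1 + (τ - s) ^ (-β)) * f s)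
                ≤ ∫ s in (0:ℝ)..τ', (1 + δ ^ (-β)) * (a * Kse k) :=
              integral_mono_on hτ'0 hI1 _root_.intervalIntegrable_const hpt
            rw [intervalIntegral.integral_const, smul_eq_mul, sub_zero] at hmono
            have hτ'T : τ' ≤ T := hτ'τ.trans hτT.2
            have haK : 0 ≤ a * Kse k := mul_nonneg ha (hKpos k).le
            calc c * (∫ s in (0:ℝ)..τ', (1 + (τ - s) ^ (-β)) * f s)
                ≤ c * (τ' * ((1 + δ ^ (-β)) * (a * Kse k))) :=
                  mul_le_mul_of_nonneg_left hmono hc.le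
            _ ≤ c * (T * ((1 + δ ^ (-β)) * (a * Kse k))) := by
                  apply mul_le_mul_of_nonneg_left _ hc.le
                  apply mul_le_mul_of_nonneg_right hτ'T (by positivity)
            _ = C * (a * Kse k) := by rw [hCdef]; ring
        -- tail bound
        have htail : c * (∫ s in τ'..τ, (1 + (τ - s) ^ (-β)) * f s) ≤ (1/2) * S t := by
          have hSt := hSnn t ht
          have hgI : IntervalIntegrable (fun s => 1 + (τ - s) ^ (-β)) volume τ' τ :=
            (hgker τ).mono_set' (by rw [Set.uIoc_of_le hτ'τ, Set.uIoc_of_le hτ0]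
                                    exact Set.Ioc_subset_Ioc hτ'0 le_rfl)
          have hpt : ∀ s ∈ Set.Icc τ' τ,
              (1 + (τ - s) ^ (-β)) * f s ≤ (1 + (τ - s) ^ (-β)) * S t := by
            intro s hs
            have hk0 : (0:ℝ) ≤ 1 + (τ - s) ^ (-β) := by
              have := Real.rpow_nonneg (sub_nonneg.2 hs.2) (-β); linarith
            have : f s ≤ S t := hfleS t ht s ⟨hτ'0.trans hs.1, hs.2.trans hτ.2⟩
            exact mul_le_mul_of_nonneg_left this hk0
          have hmono : (∫ s in τ'..τ, (1 + (τ - s) ^ (-β)) * f s)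
              ≤ ∫ s in τ'..τ, (1 + (τ - s) ^ (-β)) * S t :=
            integral_mono_on hτ'τ hI2 (hgI.mul_const _) hpt
          have hval : (∫ s in τ'..τ, (1 + (τ - s) ^ (-β)) * S t)
              = ((τ - τ') + (τ - τ') ^ (1-β) / (1-β)) * S t := by
            rw [intervalIntegral.integral_mul_const]
            congr 1
            have h1 : IntervalIntegrable (fun _ : ℝ => (1:ℝ)) volume τ' τ :=
              _root_.intervalIntegrable_const
            have h2 : IntervalIntegrable (fun s => (τ - s) ^ (-β)) volume τ' τ :=
              (hker τ).mono_set' (by rw [Set.uIoc_of_le hτ'τ, Set.uIoc_of_le hτ0]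
                                     exact Set.Ioc_subset_Ioc hτ'0 le_rfl)
            rw [intervalIntegral.integral_add h1 h2]
            have hsub : (∫ s in τ'..τ, (τ - s) ^ (-β))
                = ∫ u in (τ - τ)..(τ - τ'), u ^ (-β) :=
              intervalIntegral.integral_comp_sub_left (fun u => u ^ (-β)) τ
            rw [hsub, sub_self,
              integral_rpow (Or.inl (by linarith : (-1:ℝ) < -β))]
            rw [Real.zero_rpow (by linarith : -β + 1 ≠ 0)]
            simp only [intervalIntegral.integral_const, smul_eq_mul, mul_one, sub_zero]
            have : -β + 1 = 1 - β := by ring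
            rw [this]
          have hh0 : 0 ≤ τ - τ' := by linarith
          have hhδ : τ - τ' ≤ δ := by
            have : τ - δ ≤ τ' := le_max_left _ _
            linarith
          have hW : c * ((τ - τ') + (τ - τ') ^ (1-β) / (1-β)) ≤ 1/2 := by
            have h1 : (τ - τ') ^ (1-β) ≤ δ ^ (1-β) := Real.rpow_le_rpow hh0 hhδ hγ.le
            have h2 : c * (τ - τ') ≤ c * δ := mul_le_mul_of_nonneg_left hhδ hc.le
            have h3 : c * (τ - τ') ^ (1-β) / (1-β) ≤ c * δ ^ (1-β) / (1-β) := by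
              gcongr
            have := hδ1; have := hδ2
            have expand : c * ((τ - τ') + (τ - τ') ^ (1-β) / (1-β))
                = c * (τ - τ') + c * (τ - τ') ^ (1-β) / (1-β) := by ring
            linarith
          have hWnn : 0 ≤ (τ - τ') + (τ - τ') ^ (1-β) / (1-β) := by
            have := Real.rpow_nonneg hh0 (1-β); positivity
          calc c * (∫ s in τ'..τ, (1 + (τ - s) ^ (-β)) * f s)
              ≤ c * (((τ - τ') + (τ - τ') ^ (1-β) / (1-β)) * S t) := by
                rw [← hval]; exact mul_le_mul_of_nonneg_left hmono hc.le
          _ = (c * ((τ - τ') + (τ - τ') ^ (1-β) / (1-β))) * S t := by ring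
          _ ≤ (1/2) * S t := mul_le_mul_of_nonneg_right hW hSt
        have := hint τ hτT
        rw [hsplit, mul_add] at this
        linarith
      -- take sup over τ
      have hSle : S t ≤ a + C * (a * Kse k) + (1/2) * S t := by
        apply csSup_le
        · exact ⟨f 0, Set.mem_image_of_mem f ⟨le_refl 0, ht.1⟩⟩
        · rintro y ⟨τ, hτ, rfl⟩
          exact key τ hτ
      have hftS : f t ≤ S t := hfleS t ht t ⟨ht.1, le_refl t⟩
      have : S t ≤ 2*a + 2*C*(a * Kse k) := by linarith
      calc f t ≤ S t := hftS
      _ ≤ 2*a + 2*C*(a*Kse k) := this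
      _ = a * (2 + 2*C*Kse k) := by ring
      _ = a * Kse (k+1) := by rw [hKsucc]
  intro t ht
  apply main N t ht
  have h1 : T / δ ≤ (N:ℝ) := Nat.le_ceil _
  have h2 : T ≤ N * δ := by
    rw [div_le_iff₀ hδpos] at h1; linarith
  exact ht.2.trans h2
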